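/- The linear operator Φ on μ1 defined by Φ(x) = x + x_2 e_{n−2k}, where x = Σ_{i=1}^{n−2k} x_i e_i + Σ_{i=1}^{2k} y_i f_i, is a local automorphism of μ1 but is not an automorphism of μ1. -/

import Mathlib

/-- Underlying space of the `p`-filiform Leibniz algebra `μ₁`:
`e`-part has `m + 4 = n - 2k` coordinates, `f`-part has `2(k+1)` coordinates
(so the paper's `k ≥ 1` is `k + 1` here, and `n = (m + 4) + 2(k + 1) ≥ 2k + 4`). -/
abbrev MuV (m k : ℕ) (K : Type*) := (Fin (m + 4) → K) × (Fin (2 * (k + 1)) → K)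

variable {K : Type*} [Field K]

/-- Basis vector `e_{i+1}` (0-indexed). -/
def eb (K : Type*) [Field K] (m k : ℕ) (i : Fin (m + 4)) : MuV m k K := (Pi.single i 1, 0)

/-- Basis vector `f_{j+1}` (0-indexed). -/
def fb (K : Type*) [Field K] (m k : ℕ) (j : Fin (2 * (k + 1))) : MuV m k K := (0, Pi.single j 1)

/-- The bracket of `μ₁`: `[e_i, e_1] = e_{i+1}` for `1 ≤ i ≤ n - 2k - 1` and
`[e_1, f_j] = f_{k+j}` for `1 ≤ j ≤ k` (paper indexing), all other products zero. -/
def mu1Br (K : Type*) [Field K] (m k : ℕ) (x y : MuV m k K) : MuV m k K :=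
  (fun i => if 1 ≤ (i : ℕ) then
      x.1 ⟨(i : ℕ) - 1, lt_of_le_of_lt (Nat.sub_le _ _) i.isLt⟩ * y.1 ⟨0, Nat.succ_pos _⟩
    else 0,
   fun j => if k + 1 ≤ (j : ℕ) then
      x.1 ⟨0, Nat.succ_pos _⟩ * y.2 ⟨(j : ℕ) - (k + 1), lt_of_le_of_lt (Nat.sub_le _ _) j.isLt⟩
    else 0)

/-- `φ` is an automorphism of `μ₁`. -/
def IsMu1Aut (m k : ℕ) (φ : MuV m k K →ₗ[K] MuV m k K) : Prop :=
  Function.Bijective φ ∧ ∀ x y, φ (mu1Br K m k x y) = mu1Br K m k (φ x) (φ y)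

/-- `Δ` is a local automorphism of `μ₁`. -/
def IsMu1LocAut (m k : ℕ) (Δ : MuV m k K →ₗ[K] MuV m k K) : Prop :=
  ∀ x, ∃ φ : MuV m k K →ₗ[K] MuV m k K, IsMu1Aut m k φ ∧ Δ x = φ x


lemma mu_lt_one4 (m : ℕ) : 1 < m + 4 := by omega

lemma mu_lt_m3 (m : ℕ) : m + 3 < m + 4 := by omega

def Fmap (K : Type*) [Field K] (m k : ℕ) (a b : K) : MuV m k K →ₗ[K] MuV m k K where
  toFun x := x + (b * x.1 ⟨0, by omega⟩) • eb K m k ⟨m + 2, by omega⟩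
      + (a * x.1 ⟨0, by omega⟩ + b * x.1 ⟨1, mu_lt_one4 m⟩) • eb K m k ⟨m + 3, mu_lt_m3 m⟩
  map_add' x y := by
    simp only [Prod.fst_add, Pi.add_apply]
    module
  map_smul' c x := by
    simp only [Prod.smul_fst, Pi.smul_apply, smul_eq_mul, RingHom.id_apply]
    module

lemma eb_fst (m k : ℕ) (i j : Fin (m+4)) : (eb K m k i).1 j = if j = i then 1 else 0 := by
  simp [eb, Pi.single_apply]

lemma eb_snd (m k : ℕ) (i : Fin (m+4)) (j : Fin (2*(k+1))) : (eb K m k i).2 j = 0 := rfl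

lemma Fmap_fst (m k : ℕ) (a b : K) (x : MuV m k K) (j : Fin (m+4)) :
    (Fmap K m k a b x).1 j = x.1 j
      + (b * x.1 ⟨0, by omega⟩) * (if (j:ℕ) = m + 2 then 1 else 0)
      + (a * x.1 ⟨0, by omega⟩ + b * x.1 ⟨1, mu_lt_one4 m⟩) * (if (j:ℕ) = m + 3 then 1 else 0) := by
  simp [Fmap, eb_fst, Fin.ext_iff, mul_ite]

lemma Fmap_snd (m k : ℕ) (a b : K) (x : MuV m k K) (j : Fin (2*(k+1))) :
    (Fmap K m k a b x).2 j = x.2 j := by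
  simp [Fmap, eb]

lemma Fmap_fst0 (m k : ℕ) (a b : K) (x : MuV m k K) :
    (Fmap K m k a b x).1 ⟨0, by omega⟩ = x.1 ⟨0, by omega⟩ := by
  rw [Fmap_fst]; norm_num

lemma Fmap_fst1 (m k : ℕ) (a b : K) (x : MuV m k K) :
    (Fmap K m k a b x).1 ⟨1, mu_lt_one4 m⟩ = x.1 ⟨1, mu_lt_one4 m⟩ := by
  rw [Fmap_fst]; norm_num

lemma mu1Br_fst0 (m k : ℕ) (x y : MuV m k K) :
    (mu1Br K m k x y).1 ⟨0, by omega⟩ = 0 := by simp [mu1Br]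

lemma mu1Br_fst1 (m k : ℕ) (x y : MuV m k K) :
    (mu1Br K m k x y).1 ⟨1, mu_lt_one4 m⟩ = x.1 ⟨0, by omega⟩ * y.1 ⟨0, by omega⟩ := by
  simp [mu1Br]

lemma Fmap_fst0' (m k : ℕ) (a b : K) (x : MuV m k K) :
    (Fmap K m k a b x).1 0 = x.1 0 := Fmap_fst0 m k a b x

lemma Fmap_hom (m k : ℕ) (a b : K) (x y : MuV m k K) :
    Fmap K m k a b (mu1Br K m k x y) = mu1Br K m k (Fmap K m k a b x) (Fmap K m k a b y) := by
  apply Prod.ext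
  · funext j
    rw [Fmap_fst]
    show _ = (if 1 ≤ (j:ℕ) then _ * _ else 0)
    rw [Fmap_fst, Fmap_fst0]
    show (if 1 ≤ (j:ℕ) then x.1 _ * y.1 _ else 0) + _ + _ = _
    rw [mu1Br_fst0, mu1Br_fst1]
    rcases j with ⟨j, hj⟩
    simp only []
    rcases Nat.eq_or_lt_of_le (Nat.zero_le j) with h0 | h1
    · simp [← h0]
    · have h1' : 1 ≤ j := h1
      simp only [if_pos h1']
      by_cases hm2 : j = m + 3
      · subst hm2
        have : m + 3 - 1 = m + 2 := by omega
        simp only [this, if_pos rfl, if_neg (by omega : ¬ (m+2 = m+3)),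
          if_neg (by omega : ¬ (m+3 = m+2))]
        ring
      · have e1 : ¬ (j - 1 = m + 2) := by omega
        have e2 : ¬ (j - 1 = m + 3) := by omega
        have e3 : ¬ (j = m + 3) := hm2
        by_cases e4 : j = m + 2 <;> simp [e1, e2, e3, e4]
  · funext j
    rw [Fmap_snd]
    simp [mu1Br, Fmap_fst0', Fmap_snd]

lemma Fmap_comp (m k : ℕ) (a b a' b' : K) (x : MuV m k K) :
    Fmap K m k a b (Fmap K m k a' b' x) = Fmap K m k (a + a') (b + b') x := by
  show Fmap K m k a' b' x + _ + _ = x + _ + _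
  rw [Fmap_fst0, Fmap_fst1]
  show x + _ + _ + _ + _ = _
  module

lemma Fmap_aut (m k : ℕ) (a b : K) : Function.Bijective (Fmap K m k a b) := by
  have h1 : Function.LeftInverse (Fmap K m k (-a) (-b)) (Fmap K m k a b) := by
    intro x; rw [Fmap_comp]; simp only [neg_add_cancel]
    show x + _ + _ = x
    simp [eb]
  have h2 : Function.RightInverse (Fmap K m k (-a) (-b)) (Fmap K m k a b) := by
    intro x; rw [Fmap_comp]; simp only [add_neg_cancel]
    show x + _ + _ = x
    simp [eb]
  exact ⟨h1.injective, h2.surjective⟩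

def PhiMap (K : Type*) [Field K] (m k : ℕ) : MuV m k K →ₗ[K] MuV m k K where
  toFun x := x + (x.1 ⟨1, mu_lt_one4 m⟩) • eb K m k ⟨m + 3, mu_lt_m3 m⟩
  map_add' x y := by
    simp only [Prod.fst_add, Pi.add_apply]
    module
  map_smul' c x := by
    simp only [Prod.smul_fst, Pi.smul_apply, smul_eq_mul, RingHom.id_apply]
    module

/-- The linear operator `Φ(x) = x + x_2 e_{n-2k}` (where `x_2` is the
`e_2`-coordinate of `x`) is a local automorphism of `μ₁` but not an automorphism. -/
theorem stmt12 (K : Type*) [Field K] [CharZero K] (m k : ℕ) :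
    ∃ Φ : MuV m k K →ₗ[K] MuV m k K,
      (∀ x : MuV m k K, Φ x = x + (x.1 ⟨1, by omega⟩) • eb K m k ⟨m + 3, by omega⟩) ∧
      IsMu1LocAut m k Φ ∧ ¬ IsMu1Aut m k Φ := by
  refine ⟨PhiMap K m k, fun x => rfl, ?_, ?_⟩
  · intro x
    by_cases h : x.1 ⟨0, by omega⟩ = 0
    · refine ⟨Fmap K m k 0 1, ⟨Fmap_aut m k 0 1, Fmap_hom m k 0 1⟩, ?_⟩
      show x + _ • _ = x + _ • _ + _ • _
      rw [h]
      simp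
    · refine ⟨Fmap K m k (x.1 ⟨1, by omega⟩ / x.1 ⟨0, by omega⟩) 0,
        ⟨Fmap_aut m k _ _, Fmap_hom m k _ _⟩, ?_⟩
      show x + _ • _ = x + _ • _ + _ • _
      rw [div_mul_cancel₀ _ h]
      simp
  · rintro ⟨-, hc⟩
    have := congrFun (congrArg Prod.fst (hc (eb K m k ⟨0, by omega⟩) (eb K m k ⟨0, by omega⟩)))
      ⟨m + 3, by omega⟩
    have h1 : (PhiMap K m k) (eb K m k ⟨0, by omega⟩) = eb K m k ⟨0, by omega⟩ := by
      show eb K m k _ + _ • _ = _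
      rw [eb_fst]
      simp [Fin.ext_iff]
    rw [h1] at this
    have h2 : (mu1Br K m k (eb K m k ⟨0, by omega⟩) (eb K m k ⟨0, by omega⟩)).1 ⟨m+3, by omega⟩
        = 0 := by
      simp [mu1Br, eb_fst, Fin.ext_iff]
    have h3 : ((PhiMap K m k) (mu1Br K m k (eb K m k ⟨0, by omega⟩)
        (eb K m k ⟨0, by omega⟩))).1 ⟨m+3, by omega⟩ = 1 := by
      simp only [PhiMap, LinearMap.coe_mk, AddHom.coe_mk, Prod.fst_add, Prod.smul_fst,
        Pi.add_apply, Pi.smul_apply, smul_eq_mul, h2, mu1Br_fst1, eb_fst]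
      simp [Fin.ext_iff]
    rw [h3, h2] at this
    exact one_ne_zero this
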